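/- If A and C are bounded linear operators on a complex Hilbert space with A positive and invertible and C self-adjoint, then the spectrum of the product AC is contained in the real line. -/

import Mathlib

open scoped InnerProductSpace
open ContinuousLinearMap

private theorem aux_isUnit
    {H : Type*} [NormedAddCommGroup H] [InnerProductSpace ℂ H] [CompleteSpace H]
    (A : H →L[ℂ] H) (c : ℝ) (hc : 0 < c)
    (hAc : ∀ x : H, c * ‖x‖ ^ 2 ≤ (⟪A x, x⟫_ℂ).re) : IsUnit A := by
  have hbound : ∀ x : H, ‖x‖ ≤ c⁻¹ * ‖A x‖ := by
    intro x
    rcases eq_or_ne x 0 with rfl | hx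
    · simp [mul_nonneg (inv_nonneg.2 hc.le) (norm_nonneg _)]
    · have hxpos : 0 < ‖x‖ := norm_pos_iff.2 hx
      have h1 : c * ‖x‖ ^ 2 ≤ ‖A x‖ * ‖x‖ := by
        refine (hAc x).trans ?_
        calc (⟪A x, x⟫_ℂ).re ≤ ‖⟪A x, x⟫_ℂ‖ := Complex.re_le_norm _
          _ ≤ ‖A x‖ * ‖x‖ := norm_inner_le_norm _ _
      have h2 : c * ‖x‖ ≤ ‖A x‖ := by
        have := (mul_le_mul_iff_of_pos_right hxpos).1 (by nlinarith : (c * ‖x‖) * ‖x‖ ≤ ‖A x‖ * ‖x‖)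
        linarith
      rw [inv_mul_eq_div, le_div_iff₀ hc]
      linarith
  have hanti : AntilipschitzWith (⟨c⁻¹, (inv_nonneg.2 hc.le)⟩) A :=
    AddMonoidHomClass.antilipschitz_of_bound A hbound
  have hinj : Function.Injective A := hanti.injective
  have hclosed : IsClosed (Set.range A) := hanti.isClosed_range A.uniformContinuous
  have hcl : IsClosed ((LinearMap.range (A : H →ₗ[ℂ] H) : Submodule ℂ H) : Set H) := by
    simpa [LinearMap.coe_range] using hclosed
  have : CompleteSpace (LinearMap.range (A : H →ₗ[ℂ] H) : Submodule ℂ H) := hcl.completeSpace_coe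
  have horth : (LinearMap.range (A : H →ₗ[ℂ] H))ᗮ = ⊥ := by
    rw [Submodule.eq_bot_iff]
    intro y hy
    have h0 : ⟪A y, y⟫_ℂ = 0 := hy (A y) (LinearMap.mem_range_self _ y)
    have := hAc y
    rw [h0] at this
    simp only [Complex.zero_re] at this
    have h2 : ‖y‖ ^ 2 ≤ 0 := by nlinarith
    have h3 : ‖y‖ = 0 := by nlinarith [sq_nonneg ‖y‖, norm_nonneg y]
    simpa using h3
  have hsurj : Function.Surjective A := by
    erw [← LinearMap.range_eq_top (f := (A : H →ₗ[ℂ] H))]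
    exact Submodule.orthogonal_eq_bot_iff.mp horth
  exact ContinuousLinearMap.isUnit_iff_bijective.2 ⟨hinj, hsurj⟩

/-- If `A` is positive and invertible (self-adjoint and bounded below) and `C` is
self-adjoint, then the spectrum of `AC` is real. -/
theorem spectrum_posMul_selfAdjoint_real
    {H : Type*} [NormedAddCommGroup H] [InnerProductSpace ℂ H] [CompleteSpace H]
    (A C : H →L[ℂ] H)
    (hA : IsSelfAdjoint A) (c : ℝ) (hc : 0 < c)
    (hAc : ∀ x : H, c * ‖x‖ ^ 2 ≤ (⟪A x, x⟫_ℂ).re)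
    (hC : IsSelfAdjoint C) :
    ∀ z ∈ spectrum ℂ (A ∘L C), z.im = 0 := by
  -- A is nonneg
  have hA0 : (0 : H →L[ℂ] H) ≤ A := by
    rw [ContinuousLinearMap.nonneg_iff_isPositive]
    refine ⟨ContinuousLinearMap.isSelfAdjoint_iff_isSymmetric.mp hA, fun x => ?_⟩
    have := hAc x
    have h0 : (0 : ℝ) ≤ c * ‖x‖ ^ 2 := by positivity
    exact le_trans h0 this
  -- A is a unit
  obtain ⟨u, hu⟩ := aux_isUnit A c hc hAc
  -- the square root of A
  set B : H →L[ℂ] H := CFC.sqrt A with hBdef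
  have hB0 : (0 : H →L[ℂ] H) ≤ B := CFC.sqrt_nonneg A
  have hBsa : IsSelfAdjoint B := IsSelfAdjoint.of_nonneg hB0
  have hBB : B * B = A := CFC.sqrt_mul_sqrt_self A hA0
  -- B is a unit
  have hBu : IsUnit B := by
    refine isUnit_iff_exists.2 ⟨B * ↑u⁻¹, ?_, ?_⟩
    · have : B * (B * ↑u⁻¹) = A * ↑u⁻¹ := by rw [← mul_assoc, hBB]
      rw [this, ← hu]
      exact u.mul_inv
    · -- left inverse: (B * u⁻¹) * B = ?
      -- we show first u⁻¹ commutes appropriately via a right inverse argument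
      -- Use: (u⁻¹ * B) * B = 1 and (B * u⁻¹) with uniqueness of inverses
      have hleft : (↑u⁻¹ * B) * B = 1 := by
        rw [mul_assoc, hBB, ← hu]
        exact u.inv_mul
      have hright : B * (B * ↑u⁻¹) = 1 := by
        rw [← mul_assoc, hBB, ← hu]
        exact u.mul_inv
      -- from left inv l and right inv r of B : l = r
      have : (↑u⁻¹ * B : H →L[ℂ] H) = B * ↑u⁻¹ := by
        calc (↑u⁻¹ * B : H →L[ℂ] H) = (↑u⁻¹ * B) * (B * (B * ↑u⁻¹)) := by rw [hright, mul_one]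
          _ = ((↑u⁻¹ * B) * B) * (B * ↑u⁻¹) := by noncomm_ring
          _ = B * ↑u⁻¹ := by rw [hleft, one_mul]
      rw [← this]
      exact hleft
  obtain ⟨v, hv⟩ := hBu
  -- conjugation: A * C = v * (B * C * B) * v⁻¹
  have hconj : A ∘L C = ↑v * (B * C * B) * ↑v⁻¹ := by
    rw [← hv]
    have h1 : (↑v * (↑v * C * ↑v) : H →L[ℂ] H) = (↑v * ↑v * C) * ↑v := by noncomm_ring
    rw [h1, Units.mul_inv_cancel_right, hv, hBB]
    rfl
  -- B * C * B is self-adjoint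
  have hsa : IsSelfAdjoint (B * C * B) := by
    simpa [hBsa.star_eq] using hC.conjugate B
  intro z hz
  rw [hconj, spectrum.units_conjugate] at hz
  rw [hsa.mem_spectrum_eq_re hz]
  exact Complex.ofReal_im _
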